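/- (Expected Ratio Optimality, first part.) Let m ≥ 2 and n ≥ 1, and let X(0), ..., X(n-1) be random vectors in ℝ^m with components bounded as X_min,i ≤ X_i(k) ≤ X_max,i, X_min,i > -1, X_max,i finite. Define 𝒳_{n,i} := ∏_{k=0}^{n-1} (1 + X_i(k)) - 1 and g_n(K) := (1/n) E[log(1 + K^T 𝒳_n)]. Let K* ∈ 𝒦 maximize g_n over the unit simplex 𝒦 = {K ∈ ℝ^m : K_i ≥ 0 for all i, ∑_{i=1}^m K_i = 1}. Then for every K ∈ 𝒦, E[(1 + K^T 𝒳_n) / (1 + K*^T 𝒳_n)] ≤ 1. -/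

import Mathlib

open MeasureTheory Finset

lemma log_one_add_ge (x : ℝ) (hx : -(1/2:ℝ) ≤ x) :
    x - 2*x^2 ≤ Real.log (1+x) := by
  have h1 : (0:ℝ) < 1 + x := by linarith
  have h2 : (0:ℝ) < (1+x)⁻¹ := by positivity
  have h3 := Real.log_le_sub_one_of_pos h2
  rw [Real.log_inv] at h3
  have h4 : x / (1+x) ≤ Real.log (1+x) := by
    have he : (1+x)⁻¹ - 1 = -(x / (1+x)) := by field_simp; ring
    rw [he] at h3; linarith
  have h5 : x - 2*x^2 ≤ x / (1+x) := by
    rw [le_div_iff₀ h1]; nlinarith [sq_nonneg x]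
  linarith

lemma simplex_sum_bounds {m : ℕ} (K v : Fin m → ℝ) (hK0 : ∀ i, 0 ≤ K i)
    (hK1 : ∑ i, K i = 1) {a b : ℝ} (hva : ∀ i, a ≤ v i) (hvb : ∀ i, v i ≤ b) :
    a ≤ ∑ i, K i * v i ∧ ∑ i, K i * v i ≤ b := by
  constructor
  · calc a = ∑ i, K i * a := by rw [← Finset.sum_mul, hK1, one_mul]
    _ ≤ ∑ i, K i * v i :=
      Finset.sum_le_sum fun i _ => mul_le_mul_of_nonneg_left (hva i) (hK0 i)
  · calc ∑ i, K i * v i ≤ ∑ i, K i * b :=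
      Finset.sum_le_sum fun i _ => mul_le_mul_of_nonneg_left (hvb i) (hK0 i)
    _ = b := by rw [← Finset.sum_mul, hK1, one_mul]

lemma integrable_of_bounded_meas {Ω : Type*} [MeasurableSpace Ω] (μ : Measure Ω)
    [IsProbabilityMeasure μ] (f : Ω → ℝ) (hf : Measurable f) (C : ℝ)
    (hC : ∀ ω, |f ω| ≤ C) : Integrable f μ :=
  (integrable_const C).mono' hf.aestronglyMeasurable (ae_of_all _ fun ω => by
    simpa using hC ω)

lemma key_ratio {Ω : Type*} [MeasurableSpace Ω] (μ : Measure Ω) [IsProbabilityMeasure μ]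
    (WK WS : Ω → ℝ) (hWKm : Measurable WK) (hWSm : Measurable WS)
    (c C : ℝ) (hc : 0 < c) (hcC : c ≤ C)
    (hWKb : ∀ ω, c ≤ WK ω ∧ WK ω ≤ C) (hWSb : ∀ ω, c ≤ WS ω ∧ WS ω ≤ C)
    (hmix : ∀ l : ℝ, 0 < l → l ≤ 1 →
      ∫ ω, Real.log ((1-l) * WS ω + l * WK ω) ∂μ ≤ ∫ ω, Real.log (WS ω) ∂μ) :
    ∫ ω, WK ω / WS ω ∂μ ≤ 1 := by
  have hWS0 : ∀ ω, 0 < WS ω := fun ω => lt_of_lt_of_le hc (hWSb ω).1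
  have hWK0 : ∀ ω, 0 < WK ω := fun ω => lt_of_lt_of_le hc (hWKb ω).1
  obtain ⟨u, hu⟩ : ∃ u : Ω → ℝ, u = fun ω => WK ω / WS ω - 1 := ⟨_, rfl⟩
  obtain ⟨M, hM⟩ : ∃ M : ℝ, M = C / c := ⟨_, rfl⟩
  have hM1 : 1 ≤ M := hM ▸ (one_le_div hc).mpr hcC
  have hub : ∀ ω, |u ω| ≤ M := by
    intro ω
    rw [abs_le]
    have hr0 : 0 < WK ω / WS ω := div_pos (hWK0 ω) (hWS0 ω)
    have hrM : WK ω / WS ω ≤ C / c :=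
      div_le_div₀ (le_trans hc.le hcC) (hWKb ω).2 hc (hWSb ω).1
    constructor
    · rw [hu]; simp only []; linarith
    · rw [hu, hM]; simp only []; linarith
  have hum : Measurable u := hu ▸ (hWKm.div hWSm).sub measurable_const
  have hIu : Integrable u μ := integrable_of_bounded_meas μ u hum M hub
  have hIusq : Integrable (fun ω => u ω ^ 2) μ := by
    refine integrable_of_bounded_meas μ _ (hum.pow_const 2) (M^2) fun ω => ?_
    rw [abs_pow]
    exact pow_le_pow_left₀ (abs_nonneg _) (hub ω) 2
  have husq : ∫ ω, u ω ^ 2 ∂μ ≤ M ^ 2 := by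
    calc ∫ ω, u ω ^ 2 ∂μ ≤ ∫ _, M ^ 2 ∂μ := by
          refine integral_mono hIusq (integrable_const _) fun ω => ?_
          calc u ω ^ 2 = |u ω| ^ 2 := (sq_abs _).symm
          _ ≤ M ^ 2 := pow_le_pow_left₀ (abs_nonneg _) (hub ω) 2
    _ = M ^ 2 := by simp
  -- Bounded integrability of log WS
  have hB : ∀ {f : Ω → ℝ}, Measurable f → (∀ ω, c ≤ f ω ∧ f ω ≤ C) →
      Integrable (fun ω => Real.log (f ω)) μ := by
    intro f hfm hfb
    refine integrable_of_bounded_meas μ _ (Real.measurable_log.comp hfm)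
      (|Real.log c| + |Real.log C|) fun ω => ?_
    have h1 : Real.log c ≤ Real.log (f ω) := Real.log_le_log hc (hfb ω).1
    have h2 : Real.log (f ω) ≤ Real.log C :=
      Real.log_le_log (lt_of_lt_of_le hc (hfb ω).1) (hfb ω).2
    rw [abs_le]
    constructor
    · have := neg_abs_le (Real.log c); have := abs_nonneg (Real.log C); linarith
    · have := le_abs_self (Real.log C); have := abs_nonneg (Real.log c); linarith
  have hIlogWS : Integrable (fun ω => Real.log (WS ω)) μ := hB hWSm hWSb
  -- main ε-estimate
  have hIu0 : ∫ ω, u ω ∂μ ≤ 0 := by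
    refine le_of_forall_pos_le_add fun ε hε => ?_
    have hM0 : 0 < M := lt_of_lt_of_le one_pos hM1
    obtain ⟨l, hl0, hl1, hlM, hlε⟩ :
        ∃ l : ℝ, 0 < l ∧ l ≤ 1 ∧ l * M ≤ 1/2 ∧ l * (2*M^2) ≤ ε := by
      refine ⟨min (1/(2*M)) (ε/(2*M^2)), lt_min (by positivity) (by positivity), ?_, ?_, ?_⟩
      · calc min (1/(2*M)) (ε/(2*M^2)) ≤ 1/(2*M) := min_le_left _ _
        _ ≤ 1 := by rw [div_le_one (by positivity)]; linarith
      · calc min (1/(2*M)) (ε/(2*M^2)) * M ≤ (1/(2*M)) * M :=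
            mul_le_mul_of_nonneg_right (min_le_left _ _) hM0.le
        _ = 1/2 := by field_simp
      · calc min (1/(2*M)) (ε/(2*M^2)) * (2*M^2) ≤ (ε/(2*M^2)) * (2*M^2) :=
            mul_le_mul_of_nonneg_right (min_le_right _ _) (by positivity)
        _ = ε := by field_simp
    have hlu : ∀ ω, -(1/2:ℝ) ≤ l * u ω := by
      intro ω
      have h1 : -M ≤ u ω := (abs_le.mp (hub ω)).1
      have h2 : l * (-M) ≤ l * u ω := mul_le_mul_of_nonneg_left h1 hl0.le
      rw [mul_neg] at h2
      linarith
    have hlu2 : ∀ ω, (0:ℝ) < 1 + l * u ω := fun ω => by linarith [hlu ω]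
    -- integrability of log(1 + l*u)
    have hIlog1u : Integrable (fun ω => Real.log (1 + l * u ω)) μ := by
      refine integrable_of_bounded_meas μ _
        (Real.measurable_log.comp (measurable_const.add (measurable_const.mul hum)))
        1 fun ω => ?_
      have hub' : l * u ω ≤ 1/2 := by
        exact le_trans (mul_le_mul_of_nonneg_left (abs_le.mp (hub ω)).2 hl0.le) hlM
      rw [abs_le]
      constructor
      · have h3 : Real.log (1/2 : ℝ) ≤ Real.log (1 + l * u ω) :=
          Real.log_le_log (by norm_num) (by linarith [hlu ω])
        have h4 : Real.log (1/2 : ℝ) = - Real.log 2 := by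
          rw [one_div, Real.log_inv]
        have h5 : Real.log 2 ≤ 1 := by
          have := Real.log_le_sub_one_of_pos (by norm_num : (0:ℝ) < 2); linarith
        linarith
      · have h3 : Real.log (1 + l * u ω) ≤ (1 + l * u ω) - 1 :=
          Real.log_le_sub_one_of_pos (hlu2 ω)
        linarith
    -- from optimality: ∫ log(1 + l u) ≤ 0
    have hkey : ∫ ω, Real.log (1 + l * u ω) ∂μ ≤ 0 := by
      have hmix' := hmix l hl0 hl1
      have heq : (fun ω => Real.log ((1-l) * WS ω + l * WK ω)) =
          fun ω => Real.log (WS ω) + Real.log (1 + l * u ω) := by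
        funext ω
        have hne : WS ω ≠ 0 := (hWS0 ω).ne'
        have hid : (1-l) * WS ω + l * WK ω = WS ω * (1 + l * u ω) := by
          rw [hu]; field_simp; ring
        rw [hid, Real.log_mul hne (hlu2 ω).ne']
      rw [heq, integral_add hIlogWS hIlog1u] at hmix'
      linarith
    -- pointwise lower bound and conclude
    have hlow : ∀ ω, l * u ω - 2 * l^2 * u ω ^ 2 ≤ Real.log (1 + l * u ω) := by
      intro ω
      have := log_one_add_ge (l * u ω) (hlu ω)
      calc l * u ω - 2 * l^2 * u ω ^ 2 = l * u ω - 2 * (l * u ω)^2 := by ring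
      _ ≤ Real.log (1 + l * u ω) := this
    have hIL : Integrable (fun ω => l * u ω - 2 * l^2 * u ω ^ 2) μ :=
      (hIu.const_mul l).sub (hIusq.const_mul (2*l^2))
    have hint : ∫ ω, (l * u ω - 2 * l^2 * u ω ^ 2) ∂μ ≤ ∫ ω, Real.log (1 + l * u ω) ∂μ :=
      integral_mono hIL hIlog1u hlow
    rw [integral_sub (hIu.const_mul l) (hIusq.const_mul (2*l^2)),
      integral_const_mul, integral_const_mul] at hint
    have hq : 0 ≤ ∫ ω, u ω ^ 2 ∂μ := integral_nonneg fun ω => sq_nonneg _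
    -- l * ∫u ≤ 2 l² ∫u² ≤ 2 l² M² = l * (l * 2M²) ≤ l * ε
    have h6 : l * ∫ ω, u ω ∂μ ≤ l * (l * (2*M^2)) := by nlinarith
    have h7 : ∫ ω, u ω ∂μ ≤ l * (2*M^2) := le_of_mul_le_mul_left h6 hl0
    linarith
  -- conclusion
  have hfun : (fun ω => WK ω / WS ω) = fun ω => u ω + 1 := by
    funext ω; rw [hu]; ring
  rw [hfun, integral_add hIu (integrable_const 1)]
  simp only [integral_const, measure_univ, ENNReal.toReal_one, one_smul, smul_eq_mul, probReal_univ, mul_one]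
  linarith

/-- Expected Ratio Optimality (first part): if `K*` maximizes the expected log growth `gₙ`
over the unit simplex, then `E[(1 + Kᵀ 𝒳ₙ)/(1 + K*ᵀ 𝒳ₙ)] ≤ 1` for every `K` in the simplex. -/
theorem expected_ratio_optimality
    {Ω : Type*} [MeasurableSpace Ω] (μ : Measure Ω) [IsProbabilityMeasure μ]
    (m n : ℕ) (hm : 2 ≤ m) (hn : 1 ≤ n)
    (X : ℕ → Ω → Fin m → ℝ) (hmeas : ∀ k, Measurable (X k))
    (Xmin Xmax : Fin m → ℝ)
    (hXmin : ∀ i, -1 < Xmin i)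
    (hbd : ∀ k (ω : Ω) (i : Fin m), Xmin i ≤ X k ω i ∧ X k ω i ≤ Xmax i)
    (Kstar : Fin m → ℝ) (hKstar0 : ∀ i, 0 ≤ Kstar i) (hKstar1 : ∑ i, Kstar i = 1)
    (hopt : ∀ K : Fin m → ℝ, (∀ i, 0 ≤ K i) → ∑ i, K i = 1 →
      (1 / (n : ℝ)) *
          ∫ ω, Real.log
            (1 + ∑ i, K i * ((∏ k ∈ Finset.range n, (1 + X k ω i)) - 1)) ∂μ ≤
        (1 / (n : ℝ)) *
          ∫ ω, Real.log
            (1 + ∑ i, Kstar i * ((∏ k ∈ Finset.range n, (1 + X k ω i)) - 1)) ∂μ) :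
    ∀ K : Fin m → ℝ, (∀ i, 0 ≤ K i) → ∑ i, K i = 1 →
      ∫ ω, (1 + ∑ i, K i * ((∏ k ∈ Finset.range n, (1 + X k ω i)) - 1)) /
            (1 + ∑ i, Kstar i * ((∏ k ∈ Finset.range n, (1 + X k ω i)) - 1)) ∂μ ≤ 1 := by
  intro K hK0 hK1
  have hFin : Nonempty (Fin m) := ⟨⟨0, by omega⟩⟩
  have hlpos : ∀ i, (0:ℝ) < 1 + Xmin i := fun i => by linarith [hXmin i]
  obtain ⟨c, hcdef⟩ : ∃ c : ℝ,
      c = (univ : Finset (Fin m)).inf' univ_nonempty (fun i => (1 + Xmin i)^n) := ⟨_, rfl⟩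
  obtain ⟨C, hCdef⟩ : ∃ C : ℝ,
      C = max ((univ : Finset (Fin m)).sup' univ_nonempty (fun i => (1 + Xmax i)^n)) c :=
    ⟨_, rfl⟩
  have hc0 : 0 < c := by
    rw [hcdef]
    exact (Finset.lt_inf'_iff _).mpr fun i _ => pow_pos (hlpos i) n
  have hcC : c ≤ C := hCdef ▸ le_max_right _ _
  -- bounds on the compound products
  have hPl : ∀ (ω : Ω) i, c ≤ ∏ k ∈ Finset.range n, (1 + X k ω i) := by
    intro ω i
    calc c ≤ (1 + Xmin i)^n := hcdef ▸ Finset.inf'_le _ (mem_univ i)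
    _ = ∏ _k ∈ Finset.range n, (1 + Xmin i) := by rw [prod_const, card_range]
    _ ≤ ∏ k ∈ Finset.range n, (1 + X k ω i) :=
      Finset.prod_le_prod (fun k _ => (hlpos i).le) (fun k _ => by linarith [(hbd k ω i).1])
  have hPu : ∀ (ω : Ω) i, (∏ k ∈ Finset.range n, (1 + X k ω i)) ≤ C := by
    intro ω i
    calc (∏ k ∈ Finset.range n, (1 + X k ω i))
        ≤ ∏ _k ∈ Finset.range n, (1 + Xmax i) :=
          Finset.prod_le_prod (fun k _ => by linarith [hlpos i, (hbd k ω i).1])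
            (fun k _ => by linarith [(hbd k ω i).2])
    _ = (1 + Xmax i)^n := by rw [prod_const, card_range]
    _ ≤ C := hCdef ▸ le_trans (Finset.le_sup' (fun i => (1 + Xmax i)^n) (mem_univ i)) (le_max_left _ _)
  -- bounds for simplex-weighted wealth
  have hWb : ∀ (J : Fin m → ℝ), (∀ i, 0 ≤ J i) → ∑ i, J i = 1 → ∀ ω : Ω,
      c ≤ 1 + ∑ i, J i * ((∏ k ∈ Finset.range n, (1 + X k ω i)) - 1) ∧
      1 + ∑ i, J i * ((∏ k ∈ Finset.range n, (1 + X k ω i)) - 1) ≤ C := by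
    intro J hJ0 hJ1 ω
    have heq : 1 + ∑ i, J i * ((∏ k ∈ Finset.range n, (1 + X k ω i)) - 1)
        = ∑ i, J i * (∏ k ∈ Finset.range n, (1 + X k ω i)) := by
      simp only [mul_sub, mul_one, Finset.sum_sub_distrib, hJ1]; ring
    rw [heq]
    exact simplex_sum_bounds J _ hJ0 hJ1 (fun i => hPl ω i) (fun i => hPu ω i)
  -- measurability
  have hWm : ∀ (J : Fin m → ℝ),
      Measurable fun ω => 1 + ∑ i, J i * ((∏ k ∈ Finset.range n, (1 + X k ω i)) - 1) := by
    intro J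
    refine measurable_const.add (Finset.measurable_sum _ fun i _ => ?_)
    exact (((Finset.measurable_prod _ fun k _ =>
      measurable_const.add ((measurable_pi_apply i).comp (hmeas k))).sub
        measurable_const).const_mul (J i))
  -- mixing hypothesis from optimality
  have hmix : ∀ l : ℝ, 0 < l → l ≤ 1 →
      ∫ ω, Real.log ((1-l) * (1 + ∑ i, Kstar i * ((∏ k ∈ Finset.range n, (1 + X k ω i)) - 1))
          + l * (1 + ∑ i, K i * ((∏ k ∈ Finset.range n, (1 + X k ω i)) - 1))) ∂μ ≤
        ∫ ω, Real.log (1 + ∑ i, Kstar i * ((∏ k ∈ Finset.range n, (1 + X k ω i)) - 1)) ∂μ := by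
    intro l hl0 hl1
    have hKl0 : ∀ i, 0 ≤ (1-l) * Kstar i + l * K i := fun i =>
      add_nonneg (mul_nonneg (by linarith) (hKstar0 i)) (mul_nonneg hl0.le (hK0 i))
    have hKl1 : ∑ i, ((1-l) * Kstar i + l * K i) = 1 := by
      rw [Finset.sum_add_distrib, ← Finset.mul_sum, ← Finset.mul_sum, hKstar1, hK1]; ring
    have h := hopt _ hKl0 hKl1
    have hn0 : (0:ℝ) < 1 / n := by
      have : (0:ℝ) < n := by exact_mod_cast Nat.lt_of_lt_of_le Nat.zero_lt_one hn
      positivity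
    have h' := (mul_le_mul_iff_right₀ hn0).mp h
    have heq : (fun ω => Real.log ((1-l) *
        (1 + ∑ i, Kstar i * ((∏ k ∈ Finset.range n, (1 + X k ω i)) - 1))
          + l * (1 + ∑ i, K i * ((∏ k ∈ Finset.range n, (1 + X k ω i)) - 1)))) =
        fun ω => Real.log (1 + ∑ i, ((1-l) * Kstar i + l * K i) *
          ((∏ k ∈ Finset.range n, (1 + X k ω i)) - 1)) := by
      funext ω
      congr 1
      simp only [add_mul, Finset.sum_add_distrib, mul_assoc, ← Finset.mul_sum]
      ring
    rw [heq]
    exact h'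
  exact key_ratio μ
    (fun ω => 1 + ∑ i, K i * ((∏ k ∈ Finset.range n, (1 + X k ω i)) - 1))
    (fun ω => 1 + ∑ i, Kstar i * ((∏ k ∈ Finset.range n, (1 + X k ω i)) - 1))
    (hWm K) (hWm Kstar) c C hc0 hcC (hWb K hK0 hK1) (hWb Kstar hKstar0 hKstar1) hmix
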